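/- (Congruences between p-adic Eisenstein series.) Let p be an odd prime, let a ≥ 1 be an integer, and let k₁ and k₂ be positive even integers with k₁ ≡ k₂ (mod (p−1)p^{a−1}) and with p−1 dividing neither k₁ nor k₂. Then the p-adic Eisenstein series G^{(p)}_{k₁}(z) = (1/2)ζ^{(p)}(1−k₁) + Σ_{n≥1} σ^{(p)}_{k₁−1}(n)q^n and G^{(p)}_{k₂}(z) are congruent coefficientwise modulo p^a: (i) the p-adic valuation of (1/2)ζ^{(p)}(1−k₁) − (1/2)ζ^{(p)}(1−k₂) is at least a, and (ii) for every positive integer n, σ^{(p)}_{k₁−1}(n) ≡ σ^{(p)}_{k₂−1}(n) (mod p^a). -/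

import Mathlib

open scoped Real BigOperators

open Finset


lemma exp_congr (p a : ℕ) (hp : p.Prime) (ha : 1 ≤ a) (r : ℕ) (hr : ¬ p ∣ r)
    (e₁ e₂ : ℕ) (h : e₁ ≡ e₂ [MOD (p - 1) * p ^ (a - 1)]) :
    r ^ e₁ ≡ r ^ e₂ [MOD p ^ a] := by
  have htot : Nat.totient (p ^ a) = (p - 1) * p ^ (a - 1) := by
    rw [Nat.totient_prime_pow hp ha, mul_comm]
  have hcop : Nat.Coprime r (p ^ a) :=
    ((hp.coprime_iff_not_dvd.mpr hr).symm).pow_right a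
  have key : ∀ e₁ e₂ : ℕ, e₁ ≤ e₂ → e₁ ≡ e₂ [MOD (p - 1) * p ^ (a - 1)] →
      r ^ e₁ ≡ r ^ e₂ [MOD p ^ a] := by
    intro f₁ f₂ hle hmod
    obtain ⟨t, ht⟩ := (Nat.modEq_iff_dvd' hle).mp hmod
    have : f₂ = f₁ + ((p - 1) * p ^ (a - 1)) * t := by omega
    subst this
    rw [pow_add, pow_mul, ← htot]
    have h1 : (1:ℕ) ^ t ≡ (r ^ Nat.totient (p ^ a)) ^ t [MOD p ^ a] :=
      Nat.ModEq.pow t (Nat.ModEq.pow_totient hcop).symm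
    calc r ^ f₁ = r ^ f₁ * 1 ^ t := by ring
    _ ≡ r ^ f₁ * (r ^ Nat.totient (p ^ a)) ^ t [MOD p ^ a] := Nat.ModEq.mul_left _ h1
  rcases le_total e₁ e₂ with hle | hle
  · exact key _ _ hle h
  · exact (key _ _ hle h.symm).symm


lemma modEq_sum {ι : Type*} (n : ℕ) (s : Finset ι) (f g : ι → ℕ)
    (h : ∀ i ∈ s, f i ≡ g i [MOD n]) : ∑ i ∈ s, f i ≡ ∑ i ∈ s, g i [MOD n] := by
  classical
  induction s using Finset.induction_on with
  | empty => simp [Nat.ModEq.refl]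
  | insert _ _ hx ih =>
    rw [Finset.sum_insert hx, Finset.sum_insert hx]
    exact (h _ (Finset.mem_insert_self _ _)).add
      (ih fun i hi => h i (Finset.mem_insert_of_mem hi))


lemma pow_add_expand (x y : ℤ) (m : ℕ) :
    ∃ A : ℤ, (x + y) ^ (m + 1) = y ^ (m + 1) + (m + 1) * x * y ^ m + x ^ 2 * A := by
  induction m with
  | zero => exact ⟨0, by ring⟩
  | succ m ih =>
    obtain ⟨A, hA⟩ := ih
    refine ⟨A * y + (m + 1) * y ^ m + x * A, ?_⟩
    have : (x + y) ^ (m + 1 + 1) = (x + y) ^ (m + 1) * (x + y) := by ring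
    rw [this, hA]; push_cast; ring

/-- units interval -/
def UU (p q : ℕ) : Finset ℕ := (Finset.range q).filter (fun j => ¬ p ∣ j)

def PhiI (p c N m : ℕ) : ℕ := ∑ j ∈ UU p (p ^ N), (c * j / p ^ N) * ((c * j) % p ^ N) ^ (m - 1)

def TT (p N m : ℕ) : ℕ := ∑ j ∈ UU p (p ^ N), j ^ m

lemma mem_UU {p q j : ℕ} : j ∈ UU p q ↔ j < q ∧ ¬ p ∣ j := by
  simp [UU]

lemma not_dvd_mod {p N c j : ℕ} (hp : p.Prime) (hN : 1 ≤ N) (hc : ¬ p ∣ c) (hj : ¬ p ∣ j) :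
    ¬ p ∣ (c * j) % p ^ N := by
  intro hdvd
  have hq : p ∣ p ^ N := dvd_pow_self p (by omega)
  have : (c * j) % p ^ N ≡ c * j [MOD p] :=
    (Nat.mod_modEq (c * j) (p ^ N)).of_dvd hq
  have : p ∣ c * j := by
    have h0 : (0:ℕ) ≡ c * j [MOD p] := (Nat.modEq_zero_iff_dvd.mpr hdvd).symm.trans this
    exact (Nat.modEq_zero_iff_dvd).mp h0.symm
  rcases (Nat.Prime.dvd_mul hp).mp this with h | h
  · exact hc h
  · exact hj h

lemma perm_sum (p c N : ℕ) (hp : p.Prime) (hN : 1 ≤ N) (hc : ¬ p ∣ c) (m : ℕ) :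
    ∑ j ∈ UU p (p ^ N), ((c * j) % p ^ N) ^ m = ∑ j ∈ UU p (p ^ N), j ^ m := by
  set q := p ^ N with hqdef
  have hq0 : 0 < q := pow_pos hp.pos N
  have hcop : Nat.Coprime c q := ((hp.coprime_iff_not_dvd.mpr hc).symm).pow_right N
  have htot : 1 ≤ Nat.totient q := Nat.totient_pos.mpr hq0
  set c' := c ^ (Nat.totient q - 1) with hc'def
  have hcc' : c * c' ≡ 1 [MOD q] := by
    have : c * c' = c ^ Nat.totient q := by
      rw [hc'def, ← pow_succ']
      congr 1; omega
    rw [this]; exact Nat.ModEq.pow_totient hcop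
  have hc' : ¬ p ∣ c' := fun h => hc (hp.dvd_of_dvd_pow h)
  refine Finset.sum_nbij' (fun j => (c * j) % q) (fun j => (c' * j) % q) ?_ ?_ ?_ ?_ ?_
  · intro j hj
    rw [mem_UU] at hj ⊢
    exact ⟨Nat.mod_lt _ hq0, not_dvd_mod hp hN hc hj.2⟩
  · intro j hj
    rw [mem_UU] at hj ⊢
    exact ⟨Nat.mod_lt _ hq0, not_dvd_mod hp hN hc' hj.2⟩
  · intro j hj
    rw [mem_UU] at hj
    have : c' * ((c * j) % q) ≡ j [MOD q] := by
      calc c' * ((c * j) % q) ≡ c' * (c * j) [MOD q] :=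
            Nat.ModEq.mul_left c' (Nat.mod_modEq _ _)
      _ = (c * c') * j := by ring
      _ ≡ 1 * j [MOD q] := Nat.ModEq.mul_right j hcc'
      _ = j := one_mul j
    calc (c' * ((c * j) % q)) % q = j % q := this
    _ = j := Nat.mod_eq_of_lt hj.1
  · intro j hj
    rw [mem_UU] at hj
    have hme : c * ((c' * j) % q) ≡ j [MOD q] := by
      calc c * ((c' * j) % q) ≡ c * (c' * j) [MOD q] :=
            Nat.ModEq.mul_left c (Nat.mod_modEq _ _)
      _ = (c * c') * j := by ring
      _ ≡ 1 * j [MOD q] := Nat.ModEq.mul_right j hcc'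
      _ = j := one_mul j
    calc (c * ((c' * j) % q)) % q = j % q := hme
    _ = j := Nat.mod_eq_of_lt hj.1
  · intro j _; rfl

lemma stepA (p c N m : ℕ) (hp : p.Prime) (hN : 1 ≤ N) (hc : ¬ p ∣ c) (hm : 1 ≤ m) :
    ∃ Z : ℤ, ((c : ℤ) ^ m - 1) * (TT p N m : ℤ)
      = (m : ℤ) * (p : ℤ) ^ N * (PhiI p c N m : ℤ) + ((p : ℤ) ^ N) ^ 2 * Z := by
  obtain ⟨m', rfl⟩ : ∃ m', m = m' + 1 := ⟨m - 1, by omega⟩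
  set q := p ^ N with hqdef
  have hq0 : 0 < q := pow_pos hp.pos N
  have hA : ∀ j : ℕ, ∃ A : ℤ, ((c : ℤ) * j) ^ (m' + 1) =
      (((c * j) % q : ℕ) : ℤ) ^ (m' + 1)
      + ((m' : ℤ) + 1) * (q : ℤ) * ((c * j / q : ℕ) : ℤ) * (((c * j) % q : ℕ) : ℤ) ^ m'
      + (q : ℤ) ^ 2 * (((c * j / q : ℕ) : ℤ) ^ 2 * A) := by
    intro j
    obtain ⟨A, hA⟩ := pow_add_expand ((q : ℤ) * ((c * j / q : ℕ) : ℤ)) (((c * j) % q : ℕ) : ℤ) m'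
    refine ⟨A, ?_⟩
    have hxy : (q : ℤ) * ((c * j / q : ℕ) : ℤ) + (((c * j) % q : ℕ) : ℤ) = (c : ℤ) * j := by
      push_cast
      exact_mod_cast congrArg (Nat.cast : ℕ → ℤ) (Nat.div_add_mod (c * j) q)
    rw [← hxy, hA]; ring
  choose A hA using hA
  refine ⟨∑ j ∈ UU p q, ((c * j / q : ℕ) : ℤ) ^ 2 * A j, ?_⟩
  have hTT : (TT p N (m' + 1) : ℤ) = ∑ j ∈ UU p q, (j : ℤ) ^ (m' + 1) := by
    rw [TT]; push_cast; rfl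
  have hPhi : (PhiI p c N (m' + 1) : ℤ) = ∑ j ∈ UU p q, ((c * j / q : ℕ) : ℤ) * (((c * j) % q : ℕ) : ℤ) ^ m' := by
    rw [PhiI, Nat.cast_sum]
    exact Finset.sum_congr rfl fun j _ => by rw [Nat.add_sub_cancel, Nat.cast_mul, Nat.cast_pow]
  have hperm : ∑ j ∈ UU p q, (((c * j) % q : ℕ) : ℤ) ^ (m' + 1) = ∑ j ∈ UU p q, (j : ℤ) ^ (m' + 1) := by
    have := perm_sum p c N hp hN hc (m' + 1)
    exact_mod_cast congrArg (Nat.cast : ℕ → ℤ) this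
  have expand : (c : ℤ) ^ (m' + 1) * (TT p N (m' + 1) : ℤ) =
      ∑ j ∈ UU p q, ((c : ℤ) * j) ^ (m' + 1) := by
    rw [hTT, Finset.mul_sum]
    exact Finset.sum_congr rfl fun j _ => by rw [mul_pow]
  have hmid : ∑ x ∈ UU p q, ((m' : ℤ) + 1) * (q : ℤ) * ((c * x / q : ℕ) : ℤ) * (((c * x) % q : ℕ) : ℤ) ^ m'
      = ((m' : ℤ) + 1) * (q : ℤ) * ∑ x ∈ UU p q, ((c * x / q : ℕ) : ℤ) * (((c * x) % q : ℕ) : ℤ) ^ m' := by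
    rw [Finset.mul_sum]
    exact Finset.sum_congr rfl fun j _ => by ring
  have h3 : ∑ x ∈ UU p q, (q : ℤ) ^ 2 * (((c * x / q : ℕ) : ℤ) ^ 2 * A x)
      = (q : ℤ) ^ 2 * ∑ x ∈ UU p q, ((c * x / q : ℕ) : ℤ) ^ 2 * A x := (Finset.mul_sum _ _ _).symm
  have hqc : ((q : ℕ) : ℤ) = (p : ℤ) ^ N := by rw [hqdef]; push_cast; ring
  have hmc : ((m' + 1 : ℕ) : ℤ) = (m' : ℤ) + 1 := by push_cast; ring
  rw [sub_mul, one_mul, expand, Finset.sum_congr rfl fun j _ => hA j,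
      Finset.sum_add_distrib, Finset.sum_add_distrib, hperm, ← hTT, hmid, ← hPhi, h3, hqc, hmc]
  ring

noncomputable def rhoT (p m L : ℕ) : ℚ :=
  ∑ i ∈ Finset.range m, bernoulli i * ((m + 1).choose i) * (p : ℚ) ^ (L * (m - 1 - i)) / (m + 1)

lemma sum_range_pow_split (p m L : ℕ) (hm : 1 ≤ m) :
    ∑ j ∈ Finset.range (p ^ L), (j : ℚ) ^ m
      = bernoulli m * (p : ℚ) ^ L + (p : ℚ) ^ (2 * L) * rhoT p m L := by
  rw [sum_range_pow, Finset.sum_range_succ]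
  have hpl : ((p ^ L : ℕ) : ℚ) = (p : ℚ) ^ L := by push_cast; ring
  have hlast : bernoulli m * (((m + 1).choose m : ℕ) : ℚ) * ((p ^ L : ℕ) : ℚ) ^ (m + 1 - m) / (m + 1)
      = bernoulli m * (p : ℚ) ^ L := by
    have h1 : m + 1 - m = 1 := by omega
    have h2 : (m + 1).choose m = m + 1 := Nat.choose_succ_self_right m
    have hne : ((m : ℚ) + 1) ≠ 0 := by positivity
    rw [h1, h2, hpl]
    push_cast
    field_simp
  have hmain : ∑ i ∈ Finset.range m,
      bernoulli i * (((m + 1).choose i : ℕ) : ℚ) * ((p ^ L : ℕ) : ℚ) ^ (m + 1 - i) / (m + 1)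
      = (p : ℚ) ^ (2 * L) * rhoT p m L := by
    rw [rhoT, Finset.mul_sum]
    refine Finset.sum_congr rfl fun i hi => ?_
    have hi' : i < m := Finset.mem_range.mp hi
    have he : m + 1 - i = (m - 1 - i) + 2 := by omega
    have he2 : L * (m - 1 - i + 2) = 2 * L + L * (m - 1 - i) := by ring
    rw [he, hpl, ← pow_mul, he2, pow_add]
    ring
  rw [hlast, hmain]; ring

lemma TT_eq (p N m : ℕ) (hp : p.Prime) (hN : 1 ≤ N) (hm : 2 ≤ m) :
    (TT p N m : ℚ) = (1 - (p : ℚ) ^ (m - 1)) * bernoulli m * (p : ℚ) ^ N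
      + (p : ℚ) ^ (2 * N) * (rhoT p m N - (p : ℚ) ^ (m - 2) * rhoT p m (N - 1)) := by
  set q := p ^ N with hqdef
  have hq : q = p * p ^ (N - 1) := by
    rw [hqdef, ← pow_succ']
    congr 1; omega
  have hcast : (TT p N m : ℚ) = ∑ j ∈ UU p q, (j : ℚ) ^ m := by
    rw [TT, Nat.cast_sum]
    exact Finset.sum_congr rfl fun j _ => by rw [Nat.cast_pow]
  have hsplit : ∑ j ∈ (Finset.range q).filter (fun j => p ∣ j), (j : ℚ) ^ m
      + ∑ j ∈ UU p q, (j : ℚ) ^ m = ∑ j ∈ Finset.range q, (j : ℚ) ^ m :=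
    Finset.sum_filter_add_sum_filter_not _ _ _
  have hbij : ∑ j ∈ (Finset.range q).filter (fun j => p ∣ j), (j : ℚ) ^ m
      = ∑ i ∈ Finset.range (p ^ (N - 1)), ((p * i : ℕ) : ℚ) ^ m := by
    refine Finset.sum_nbij' (fun j => j / p) (fun i => p * i) ?_ ?_ ?_ ?_ ?_
    · intro j hj
      rw [Finset.mem_filter, Finset.mem_range] at hj
      rw [Finset.mem_range]
      rw [hq] at hj
      exact Nat.div_lt_of_lt_mul hj.1
    · intro i hi
      rw [Finset.mem_range] at hi
      rw [Finset.mem_filter, Finset.mem_range, hq]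
      exact ⟨Nat.mul_lt_mul_left hp.pos |>.mpr hi, Dvd.intro _ rfl⟩
    · intro j hj
      rw [Finset.mem_filter] at hj
      exact Nat.mul_div_cancel' hj.2
    · intro i _
      exact Nat.mul_div_cancel_left i hp.pos
    · intro j hj
      rw [Finset.mem_filter] at hj
      rw [Nat.mul_div_cancel' hj.2]
  have hfact : ∑ i ∈ Finset.range (p ^ (N - 1)), ((p * i : ℕ) : ℚ) ^ m
      = (p : ℚ) ^ m * ∑ i ∈ Finset.range (p ^ (N - 1)), (i : ℚ) ^ m := by
    rw [Finset.mul_sum]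
    exact Finset.sum_congr rfl fun i _ => by push_cast; ring
  have h1 := sum_range_pow_split p m N (by omega)
  have h2 := sum_range_pow_split p m (N - 1) (by omega)
  have e1 : (p : ℚ) ^ m * (p : ℚ) ^ (N - 1) = (p : ℚ) ^ (m - 1) * (p : ℚ) ^ N := by
    rw [← pow_add, ← pow_add]; congr 1; omega
  have e2 : (p : ℚ) ^ m * (p : ℚ) ^ (2 * (N - 1)) = (p : ℚ) ^ (m - 2) * (p : ℚ) ^ (2 * N) := by
    rw [← pow_add, ← pow_add]; congr 1; omega
  have key : ∑ j ∈ UU p q, (j : ℚ) ^ m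
      = ∑ j ∈ Finset.range q, (j : ℚ) ^ m
        - (p : ℚ) ^ m * ∑ i ∈ Finset.range (p ^ (N - 1)), (i : ℚ) ^ m := by
    rw [← hfact, ← hbij, ← hsplit]; ring
  rw [hcast, key, h1, h2]
  linear_combination (-(bernoulli m)) * e1 + (-(rhoT p m (N - 1))) * e2

lemma rhoT_bound (p m : ℕ) [hfp : Fact p.Prime] :
    ∃ C : ℝ, 0 ≤ C ∧ ∀ L : ℕ, ‖((rhoT p m L : ℚ) : ℚ_[p])‖ ≤ C := by
  refine ⟨∑ i ∈ Finset.range m, ‖((bernoulli i * ((m + 1).choose i) / (m + 1) : ℚ) : ℚ_[p])‖,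
    Finset.sum_nonneg fun i _ => norm_nonneg _, fun L => ?_⟩
  rw [rhoT]
  push_cast
  refine (norm_sum_le _ _).trans (Finset.sum_le_sum fun i hi => ?_)
  have heq : ((bernoulli i : ℚ_[p]) * ((m + 1).choose i : ℚ_[p]) * (p : ℚ_[p]) ^ (L * (m - 1 - i)) / ((m : ℚ_[p]) + 1))
      = ((bernoulli i : ℚ_[p]) * ((m + 1).choose i : ℚ_[p]) / ((m : ℚ_[p]) + 1)) * (p : ℚ_[p]) ^ (L * (m - 1 - i)) := by
    ring
  rw [heq, norm_mul]
  have h1 : ‖(p : ℚ_[p]) ^ (L * (m - 1 - i))‖ ≤ 1 := by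
    rw [norm_pow]
    refine pow_le_one₀ (norm_nonneg _) ?_
    rw [Padic.norm_p]
    have : (1:ℝ) ≤ (p:ℝ) := by exact_mod_cast hfp.out.one_lt.le
    rw [inv_le_one_iff₀]; right; exact this
  have h2 : ((bernoulli i * ((m + 1).choose i) / (m + 1) : ℚ) : ℚ_[p])
      = (bernoulli i : ℚ_[p]) * ((m + 1).choose i : ℚ_[p]) / ((m : ℚ_[p]) + 1) := by
    push_cast; ring
  exact mul_le_of_le_one_right (norm_nonneg _) h1


lemma key_tendsto (p : ℕ) [hfp : Fact p.Prime] (c m : ℕ) (hc : ¬ p ∣ c) (hm : 2 ≤ m) :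
    Filter.Tendsto (fun N : ℕ => ((PhiI p c (N + 1) m : ℕ) : ℚ_[p])) Filter.atTop
      (nhds ((((c : ℚ) ^ m - 1) * (1 - (p : ℚ) ^ (m - 1)) * bernoulli m / m : ℚ) : ℚ_[p])) := by
  have hp := hfp.out
  have hm0 : (m : ℚ) ≠ 0 := by
    have : 0 < m := by omega
    exact_mod_cast this.ne'
  have hp0 : (p : ℚ) ≠ 0 := by exact_mod_cast hp.pos.ne'
  have hZ : ∀ N : ℕ, ∃ Z : ℤ, ((c : ℤ) ^ m - 1) * (TT p (N + 1) m : ℤ)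
      = (m : ℤ) * (p : ℤ) ^ (N + 1) * (PhiI p c (N + 1) m : ℤ) + ((p : ℤ) ^ (N + 1)) ^ 2 * Z :=
    fun N => stepA p c (N + 1) m hp (by omega) hc (by omega)
  choose Z hZ using hZ
  obtain ⟨C, hC0, hC⟩ := rhoT_bound (p := p) m
  set E : ℚ := ((c : ℚ) ^ m - 1) * (1 - (p : ℚ) ^ (m - 1)) * bernoulli m / m with hEdef
  have hiden : ∀ N : ℕ, E - (PhiI p c (N + 1) m : ℚ)
      = (p : ℚ) ^ (N + 1) * ((Z N : ℚ)
        - ((c : ℚ) ^ m - 1) * (rhoT p m (N + 1) - (p : ℚ) ^ (m - 2) * rhoT p m N)) / m := by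
    intro N
    have hQ : ((c : ℚ) ^ m - 1) * (TT p (N + 1) m : ℚ)
        = (m : ℚ) * (p : ℚ) ^ (N + 1) * (PhiI p c (N + 1) m : ℚ)
          + ((p : ℚ) ^ (N + 1)) ^ 2 * (Z N : ℚ) := by exact_mod_cast hZ N
    have hT := TT_eq p (N + 1) m hp (by omega) hm
    rw [Nat.add_sub_cancel] at hT
    rw [hT] at hQ
    rw [hEdef, eq_div_iff hm0]
    have hpn : (p : ℚ) ^ (N + 1) ≠ 0 := pow_ne_zero _ hp0
    have H : ((((c : ℚ) ^ m - 1) * (1 - (p : ℚ) ^ (m - 1)) * bernoulli m)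
          - (PhiI p c (N + 1) m : ℚ) * m) * (p : ℚ) ^ (N + 1)
        = ((p : ℚ) ^ (N + 1) * ((Z N : ℚ)
          - ((c : ℚ) ^ m - 1) * (rhoT p m (N + 1) - (p : ℚ) ^ (m - 2) * rhoT p m N))) * (p : ℚ) ^ (N + 1) := by
      linear_combination hQ
    have H2 := mul_right_cancel₀ hpn H
    have hre : (((c : ℚ) ^ m - 1) * (1 - (p : ℚ) ^ (m - 1)) * bernoulli m / (m : ℚ)
        - (PhiI p c (N + 1) m : ℚ)) * (m : ℚ)
        = (((c : ℚ) ^ m - 1) * (1 - (p : ℚ) ^ (m - 1)) * bernoulli m)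
          - (PhiI p c (N + 1) m : ℚ) * m := by
      rw [sub_mul, div_mul_cancel₀ _ hm0]
    rw [hre]
    linear_combination H2
  -- norm bound
  set Km : ℝ := ‖((1 / m : ℚ) : ℚ_[p])‖ * (1 + 2 * C) with hKdef
  have hKm0 : 0 ≤ Km := by positivity
  have hbound : ∀ N : ℕ, ‖((PhiI p c (N + 1) m : ℕ) : ℚ_[p])
      - ((E : ℚ) : ℚ_[p])‖ ≤ Km * ((p : ℝ)⁻¹) ^ (N + 1) := by
    intro N
    rw [norm_sub_rev]
    have hcast : ((E : ℚ) : ℚ_[p]) - ((PhiI p c (N + 1) m : ℕ) : ℚ_[p])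
        = (((E - (PhiI p c (N + 1) m : ℚ) : ℚ)) : ℚ_[p]) := by push_cast; ring
    rw [hcast, hiden N]
    have hexp : (((p : ℚ) ^ (N + 1) * ((Z N : ℚ)
        - ((c : ℚ) ^ m - 1) * (rhoT p m (N + 1) - (p : ℚ) ^ (m - 2) * rhoT p m N)) / m : ℚ) : ℚ_[p])
        = ((1 / m : ℚ) : ℚ_[p]) * (p : ℚ_[p]) ^ (N + 1)
          * (((Z N : ℚ) - ((c : ℚ) ^ m - 1) * (rhoT p m (N + 1) - (p : ℚ) ^ (m - 2) * rhoT p m N) : ℚ) : ℚ_[p]) := by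
      push_cast; ring
    rw [hexp, norm_mul, norm_mul]
    have hppow : ‖(p : ℚ_[p]) ^ (N + 1)‖ = ((p : ℝ)⁻¹) ^ (N + 1) := by
      rw [norm_pow, Padic.norm_p]
    rw [hppow]
    have h1 : ‖((Z N : ℚ) : ℚ_[p])‖ ≤ 1 := by
      have he : (((Z N : ℚ)) : ℚ_[p]) = ((Z N : ℤ) : ℚ_[p]) := by push_cast; ring
      rw [he]; exact Padic.norm_int_le_one _
    have h2 : ‖((((c : ℚ) ^ m - 1 : ℚ)) : ℚ_[p])‖ ≤ 1 := by
      have he : ((((c : ℚ) ^ m - 1 : ℚ)) : ℚ_[p]) = (((c ^ m : ℤ) - 1 : ℤ) : ℚ_[p]) := by push_cast; ring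
      rw [he]; exact Padic.norm_int_le_one _
    have hpp : ‖(p : ℚ_[p]) ^ (m - 2)‖ ≤ 1 := by
      rw [norm_pow]
      refine pow_le_one₀ (norm_nonneg _) ?_
      rw [Padic.norm_p, inv_le_one_iff₀]
      right; exact_mod_cast hp.one_lt.le
    have h3 : ‖(((rhoT p m (N + 1) - (p : ℚ) ^ (m - 2) * rhoT p m N : ℚ)) : ℚ_[p])‖ ≤ 2 * C := by
      have e1 : (((rhoT p m (N + 1) - (p : ℚ) ^ (m - 2) * rhoT p m N : ℚ)) : ℚ_[p])
          = ((rhoT p m (N + 1) : ℚ) : ℚ_[p]) - (p : ℚ_[p]) ^ (m - 2) * ((rhoT p m N : ℚ) : ℚ_[p]) := by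
        push_cast; ring
      rw [e1]
      refine (norm_sub_le _ _).trans ?_
      have hb : ‖(p : ℚ_[p]) ^ (m - 2) * ((rhoT p m N : ℚ) : ℚ_[p])‖ ≤ C := by
        rw [norm_mul]
        calc ‖(p : ℚ_[p]) ^ (m - 2)‖ * ‖((rhoT p m N : ℚ) : ℚ_[p])‖ ≤ 1 * C :=
          mul_le_mul hpp (hC N) (norm_nonneg _) zero_le_one
        _ = C := one_mul C
      have := hC (N + 1)
      linarith
    have hZnorm : ‖(((Z N : ℚ) - ((c : ℚ) ^ m - 1) * (rhoT p m (N + 1) - (p : ℚ) ^ (m - 2) * rhoT p m N : ℚ) : ℚ) : ℚ_[p])‖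
        ≤ 1 + 2 * C := by
      have e2 : (((Z N : ℚ) - ((c : ℚ) ^ m - 1) * (rhoT p m (N + 1) - (p : ℚ) ^ (m - 2) * rhoT p m N : ℚ) : ℚ) : ℚ_[p])
          = ((Z N : ℚ) : ℚ_[p]) - ((((c : ℚ) ^ m - 1 : ℚ)) : ℚ_[p])
            * (((rhoT p m (N + 1) - (p : ℚ) ^ (m - 2) * rhoT p m N : ℚ)) : ℚ_[p]) := by
        push_cast; ring
      rw [e2]
      refine (norm_sub_le _ _).trans ?_
      have hb : ‖((((c : ℚ) ^ m - 1 : ℚ)) : ℚ_[p])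
          * (((rhoT p m (N + 1) - (p : ℚ) ^ (m - 2) * rhoT p m N : ℚ)) : ℚ_[p])‖ ≤ 2 * C := by
        rw [norm_mul]
        calc ‖((((c : ℚ) ^ m - 1 : ℚ)) : ℚ_[p])‖ * ‖(((rhoT p m (N + 1) - (p : ℚ) ^ (m - 2) * rhoT p m N : ℚ)) : ℚ_[p])‖
            ≤ 1 * (2 * C) := mul_le_mul h2 h3 (norm_nonneg _) zero_le_one
        _ = 2 * C := one_mul _
      linarith
    calc ‖((1 / m : ℚ) : ℚ_[p])‖ * ((p : ℝ)⁻¹) ^ (N + 1)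
          * ‖(((Z N : ℚ) - ((c : ℚ) ^ m - 1) * (rhoT p m (N + 1) - (p : ℚ) ^ (m - 2) * rhoT p m N : ℚ) : ℚ) : ℚ_[p])‖
        ≤ ‖((1 / m : ℚ) : ℚ_[p])‖ * ((p : ℝ)⁻¹) ^ (N + 1) * (1 + 2 * C) := by
          refine mul_le_mul_of_nonneg_left hZnorm (by positivity)
    _ = Km * ((p : ℝ)⁻¹) ^ (N + 1) := by rw [hKdef]; ring
  -- conclude tendsto
  have hg : Filter.Tendsto (fun N : ℕ => Km * ((p : ℝ)⁻¹) ^ (N + 1)) Filter.atTop (nhds 0) := by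
    have hlt : (p : ℝ)⁻¹ < 1 := by
      rw [inv_lt_one_iff₀]; right; exact_mod_cast hp.one_lt
    have h0 : (0:ℝ) ≤ (p : ℝ)⁻¹ := by positivity
    have := (tendsto_pow_atTop_nhds_zero_of_lt_one h0 hlt).const_mul Km
    rw [mul_zero] at this
    exact this.comp (Filter.tendsto_add_atTop_nat 1)
  rw [← tendsto_sub_nhds_zero_iff]
  refine squeeze_zero_norm (fun N => hbound N) hg

lemma prim_root_exists (p : ℕ) (hp : p.Prime) :
    ∃ c : ℕ, ¬ p ∣ c ∧ ∀ k : ℕ, ¬ (p - 1) ∣ k → ¬ (p : ℤ) ∣ ((c : ℤ) ^ k - 1) := by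
  haveI : Fact p.Prime := ⟨hp⟩
  obtain ⟨g, hg⟩ := IsCyclic.exists_generator (α := (ZMod p)ˣ)
  have horder : orderOf g = p - 1 := by
    rw [orderOf_eq_card_of_forall_mem_zpowers hg, Nat.card_eq_fintype_card, ZMod.card_units]
  refine ⟨((g : ZMod p)).val, ?_, ?_⟩
  · intro h
    have h0 : (((g : ZMod p).val : ℕ) : ZMod p) = 0 :=
      (ZMod.natCast_eq_zero_iff _ p).mpr h
    rw [ZMod.natCast_zmod_val] at h0
    exact Units.ne_zero g h0
  · intro k hk hdvd
    have h0 : ((((g : ZMod p).val : ℤ) ^ k - 1 : ℤ) : ZMod p) = 0 :=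
      (ZMod.intCast_zmod_eq_zero_iff_dvd _ p).mpr hdvd
    push_cast at h0
    rw [ZMod.natCast_zmod_val] at h0
    have hg1 : (g : ZMod p) ^ k = 1 := sub_eq_zero.mp h0
    have hgk : g ^ k = 1 := Units.ext (by simpa using hg1)
    have := orderOf_dvd_of_pow_eq_one hgk
    rw [horder] at this
    exact hk this


/-- The constant term `ζ^(p)(1-k) = (1 - p^(k-1)) ζ(1-k) = -(1 - p^(k-1)) B_k / k` of
the `p`-adic Eisenstein series, as a rational number. -/
noncomputable def zetaP (p k : ℕ) : ℚ := -(1 - (p : ℚ) ^ (k - 1)) * bernoulli k / k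

/-- The `p`-deprived divisor power sum `σ^(p)_m(n) = Σ_{d ∣ n, p ∤ d} d^m`. -/
def sigmaP (p m n : ℕ) : ℕ := ∑ d ∈ n.divisors.filter (fun d => ¬ p ∣ d), d ^ m

/-- congruences between `p`-adic Eisenstein series: if
`k₁ ≡ k₂ (mod (p-1)p^(a-1))` are positive even integers not divisible by `p - 1`, then
the `p`-adic Eisenstein series `G^(p)_{k₁}` and `G^(p)_{k₂}` are congruent
coefficientwise mod `p^a`: (i) `v_p((1/2)ζ^(p)(1-k₁) - (1/2)ζ^(p)(1-k₂)) ≥ a`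
(stated via the `p`-adic norm), and (ii) `σ^(p)_{k₁-1}(n) ≡ σ^(p)_{k₂-1}(n) (mod p^a)`
for all `n ≥ 1`. -/
theorem padic_eisenstein_congruences (p : ℕ) (hp : p.Prime) (hodd : Odd p)
    (a : ℕ) (ha : 1 ≤ a) (k₁ k₂ : ℕ) (hk₁ : 0 < k₁) (hk₂ : 0 < k₂)
    (he₁ : Even k₁) (he₂ : Even k₂)
    (hcong : k₁ ≡ k₂ [MOD (p - 1) * p ^ (a - 1)])
    (hnd₁ : ¬ (p - 1) ∣ k₁) (hnd₂ : ¬ (p - 1) ∣ k₂) :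
    padicNorm p ((1 / 2) * zetaP p k₁ - (1 / 2) * zetaP p k₂) ≤ (p : ℚ) ^ (-(a : ℤ)) ∧
    ∀ n : ℕ, 0 < n → sigmaP p (k₁ - 1) n ≡ sigmaP p (k₂ - 1) n [MOD p ^ a] := by
  haveI : Fact p.Prime := ⟨hp⟩
  have hp2 : p ≠ 2 := by rintro rfl; exact (by norm_num : ¬ Odd 2) hodd
  have hk₁2 : 2 ≤ k₁ := Nat.le_of_dvd hk₁ he₁.two_dvd
  have hk₂2 : 2 ≤ k₂ := Nat.le_of_dvd hk₂ he₂.two_dvd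
  have hsub : k₁ - 1 ≡ k₂ - 1 [MOD (p - 1) * p ^ (a - 1)] := by
    have e1 : k₁ - 1 + 1 = k₁ := by omega
    have e2 : k₂ - 1 + 1 = k₂ := by omega
    exact Nat.ModEq.add_right_cancel' 1 (by rw [e1, e2]; exact hcong)
  constructor
  · -- part (i)
    obtain ⟨c, hc, hcunit⟩ := prim_root_exists p hp
    have ht₁ := key_tendsto p c k₁ hc hk₁2
    have ht₂ := key_tendsto p c k₂ hc hk₂2
    have hphiC : ∀ N : ℕ, PhiI p c (N + 1) k₁ ≡ PhiI p c (N + 1) k₂ [MOD p ^ a] := by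
      intro N
      refine modEq_sum _ _ _ _ fun j hj => ?_
      have hj2 := (mem_UU.mp hj).2
      exact Nat.ModEq.mul_left _
        (exp_congr p a hp ha _ (not_dvd_mod hp (by omega) hc hj2) _ _ hsub)
    have hphiN : ∀ N : ℕ, ‖((PhiI p c (N + 1) k₁ : ℕ) : ℚ_[p])
        - ((PhiI p c (N + 1) k₂ : ℕ) : ℚ_[p])‖ ≤ (p : ℝ) ^ (-(a : ℤ)) := by
      intro N
      have hdvd : ((p : ℤ) ^ a) ∣ ((PhiI p c (N + 1) k₁ : ℤ) - (PhiI p c (N + 1) k₂ : ℤ)) := by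
        have := (hphiC N).symm.dvd
        exact_mod_cast this
      have hb := (Padic.norm_int_le_pow_iff_dvd
        ((PhiI p c (N + 1) k₁ : ℤ) - (PhiI p c (N + 1) k₂ : ℤ)) a).mpr hdvd
      have hcast : (((PhiI p c (N + 1) k₁ : ℤ) - (PhiI p c (N + 1) k₂ : ℤ) : ℤ) : ℚ_[p])
          = ((PhiI p c (N + 1) k₁ : ℕ) : ℚ_[p]) - ((PhiI p c (N + 1) k₂ : ℕ) : ℚ_[p]) := by
        push_cast; ring
      rwa [hcast] at hb
    set E₁ : ℚ := ((c : ℚ) ^ k₁ - 1) * (1 - (p : ℚ) ^ (k₁ - 1)) * bernoulli k₁ / k₁ with hE₁def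
    set E₂ : ℚ := ((c : ℚ) ^ k₂ - 1) * (1 - (p : ℚ) ^ (k₂ - 1)) * bernoulli k₂ / k₂ with hE₂def
    have hEdiff : ‖((E₁ : ℚ) : ℚ_[p]) - ((E₂ : ℚ) : ℚ_[p])‖ ≤ (p : ℝ) ^ (-(a : ℤ)) :=
      le_of_tendsto' (ht₁.sub ht₂).norm hphiN
    have hE₂le : ‖((E₂ : ℚ) : ℚ_[p])‖ ≤ 1 := by
      refine le_of_tendsto' ht₂.norm fun N => ?_
      have hcast : ((PhiI p c (N + 1) k₂ : ℕ) : ℚ_[p]) = ((PhiI p c (N + 1) k₂ : ℤ) : ℚ_[p]) := by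
        push_cast; ring
      rw [hcast]; exact Padic.norm_int_le_one _
    have hu : ∀ k : ℕ, ¬ (p - 1) ∣ k → ‖(((c : ℚ) ^ k - 1 : ℚ) : ℚ_[p])‖ = 1 := by
      intro k hk
      have he : (((c : ℚ) ^ k - 1 : ℚ) : ℚ_[p]) = (((c : ℤ) ^ k - 1 : ℤ) : ℚ_[p]) := by
        push_cast; ring
      rw [he]
      refine le_antisymm (Padic.norm_int_le_one _) ?_
      by_contra hlt
      push_neg at hlt
      exact hcunit k hk (Padic.norm_intCast_lt_one_iff.mp hlt)
    have hu₁ := hu k₁ hnd₁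
    have hu₂ := hu k₂ hnd₂
    have hcc : ‖(((c : ℚ) ^ k₂ - 1 : ℚ) : ℚ_[p]) - (((c : ℚ) ^ k₁ - 1 : ℚ) : ℚ_[p])‖
        ≤ (p : ℝ) ^ (-(a : ℤ)) := by
      have hmod := exp_congr p a hp ha c hc k₁ k₂ hcong
      have hdvd : ((p : ℤ) ^ a) ∣ ((c : ℤ) ^ k₂ - (c : ℤ) ^ k₁) := by
        have := hmod.dvd
        exact_mod_cast this
      have hb := (Padic.norm_int_le_pow_iff_dvd ((c : ℤ) ^ k₂ - (c : ℤ) ^ k₁) a).mpr hdvd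
      have hcast : (((c : ℤ) ^ k₂ - (c : ℤ) ^ k₁ : ℤ) : ℚ_[p])
          = (((c : ℚ) ^ k₂ - 1 : ℚ) : ℚ_[p]) - (((c : ℚ) ^ k₁ - 1 : ℚ) : ℚ_[p]) := by
        push_cast; ring
      rwa [hcast] at hb
    set W₁ : ℚ := (1 - (p : ℚ) ^ (k₁ - 1)) * bernoulli k₁ / k₁ with hW₁def
    set W₂ : ℚ := (1 - (p : ℚ) ^ (k₂ - 1)) * bernoulli k₂ / k₂ with hW₂def
    have hE₁W : ((E₁ : ℚ) : ℚ_[p]) = (((c : ℚ) ^ k₁ - 1 : ℚ) : ℚ_[p]) * ((W₁ : ℚ) : ℚ_[p]) := by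
      have : E₁ = ((c : ℚ) ^ k₁ - 1) * W₁ := by rw [hE₁def, hW₁def]; ring
      rw [this]; push_cast; ring
    have hE₂W : ((E₂ : ℚ) : ℚ_[p]) = (((c : ℚ) ^ k₂ - 1 : ℚ) : ℚ_[p]) * ((W₂ : ℚ) : ℚ_[p]) := by
      have : E₂ = ((c : ℚ) ^ k₂ - 1) * W₂ := by rw [hE₂def, hW₂def]; ring
      rw [this]; push_cast; ring
    have hWdiff : ‖((W₁ : ℚ) : ℚ_[p]) - ((W₂ : ℚ) : ℚ_[p])‖ ≤ (p : ℝ) ^ (-(a : ℤ)) := by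
      have hfull : ‖((((c : ℚ) ^ k₁ - 1 : ℚ) : ℚ_[p]) * (((c : ℚ) ^ k₂ - 1 : ℚ) : ℚ_[p]))
          * (((W₁ : ℚ) : ℚ_[p]) - ((W₂ : ℚ) : ℚ_[p]))‖
          = ‖((W₁ : ℚ) : ℚ_[p]) - ((W₂ : ℚ) : ℚ_[p])‖ := by
        rw [norm_mul, norm_mul, hu₁, hu₂]; ring
      rw [← hfull]
      have hkey : ((((c : ℚ) ^ k₁ - 1 : ℚ) : ℚ_[p]) * (((c : ℚ) ^ k₂ - 1 : ℚ) : ℚ_[p]))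
          * (((W₁ : ℚ) : ℚ_[p]) - ((W₂ : ℚ) : ℚ_[p]))
          = (((c : ℚ) ^ k₂ - 1 : ℚ) : ℚ_[p]) * (((E₁ : ℚ) : ℚ_[p]) - ((E₂ : ℚ) : ℚ_[p]))
            + ((((c : ℚ) ^ k₂ - 1 : ℚ) : ℚ_[p]) - (((c : ℚ) ^ k₁ - 1 : ℚ) : ℚ_[p]))
              * ((E₂ : ℚ) : ℚ_[p]) := by
        rw [hE₁W, hE₂W]; ring
      rw [hkey]
      refine (Padic.nonarchimedean _ _).trans (max_le ?_ ?_)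
      · rw [norm_mul, hu₂, one_mul]; exact hEdiff
      · rw [norm_mul]
        calc ‖(((c : ℚ) ^ k₂ - 1 : ℚ) : ℚ_[p]) - (((c : ℚ) ^ k₁ - 1 : ℚ) : ℚ_[p])‖
            * ‖((E₂ : ℚ) : ℚ_[p])‖ ≤ (p : ℝ) ^ (-(a : ℤ)) * 1 :=
          mul_le_mul hcc hE₂le (norm_nonneg _) (by positivity)
        _ = (p : ℝ) ^ (-(a : ℤ)) := mul_one _
    have hhalf : ‖((1 / 2 : ℚ) : ℚ_[p])‖ = 1 := by
      have h2 : ‖((2 : ℤ) : ℚ_[p])‖ = 1 := by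
        refine le_antisymm (Padic.norm_int_le_one _) ?_
        by_contra hlt
        push_neg at hlt
        have hdvd := (Padic.norm_intCast_lt_one_iff (k := 2)).mp hlt
        have hpn : p ∣ 2 := by exact_mod_cast hdvd
        exact hp2 ((Nat.prime_dvd_prime_iff_eq hp Nat.prime_two).mp hpn)
      have he : ((1 / 2 : ℚ) : ℚ_[p]) = (((2 : ℤ) : ℚ_[p]))⁻¹ := by
        rw [one_div, Rat.cast_inv]
        norm_num
      rw [he, norm_inv, h2, inv_one]
    have hX : ((1 / 2 : ℚ) * zetaP p k₁ - (1 / 2 : ℚ) * zetaP p k₂ : ℚ)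
        = (1 / 2 : ℚ) * (W₂ - W₁) := by
      rw [zetaP, zetaP, hW₁def, hW₂def]; ring
    have hnorm : ‖(((1 / 2 : ℚ) * zetaP p k₁ - (1 / 2 : ℚ) * zetaP p k₂ : ℚ) : ℚ_[p])‖
        ≤ (p : ℝ) ^ (-(a : ℤ)) := by
      rw [hX]
      have hcast : (((1 / 2 : ℚ) * (W₂ - W₁) : ℚ) : ℚ_[p])
          = ((1 / 2 : ℚ) : ℚ_[p]) * (((W₂ : ℚ) : ℚ_[p]) - ((W₁ : ℚ) : ℚ_[p])) := by
        push_cast; ring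
      rw [hcast, norm_mul, hhalf, one_mul, norm_sub_rev]
      exact hWdiff
    rw [Padic.eq_padicNorm] at hnorm
    have hfin : ((padicNorm p ((1 / 2 : ℚ) * zetaP p k₁ - (1 / 2 : ℚ) * zetaP p k₂) : ℚ) : ℝ)
        ≤ (((p : ℚ) ^ (-(a : ℤ)) : ℚ) : ℝ) := by
      refine hnorm.trans (le_of_eq ?_)
      push_cast
      ring
    exact_mod_cast hfin
  · -- part (ii)
    intro n hn
    refine modEq_sum _ _ _ _ fun d hd => ?_
    rw [Finset.mem_filter] at hd
    exact exp_congr p a hp ha d hd.2 (k₁ - 1) (k₂ - 1) hsub
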